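/- Let K be a field of characteristic zero and extend the derivation ∂ = y ∂/∂x + z ∂/∂y to the localization B = K[x,y,z][z⁻¹]. Then every element s ∈ B with ∂(s) = 1 has the form s = y/z + h(z, z⁻¹, y² − 2xz) for some polynomial h; equivalently, s − y/z ∈ Ker(∂) and Ker(∂) on B equals K[z, z⁻¹, y² − 2xz]. -/

import Mathlib

open MvPolynomial

/-- The derivation `y ∂/∂x + z ∂/∂y` on `K[x,y,z]`, where `x = X 0`, `y = X 1`, `z = X 2`. -/
noncomputable def parabolicDerivation (K : Type*) [CommRing K] :
    Derivation K (MvPolynomial (Fin 3) K) (MvPolynomial (Fin 3) K) :=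
  MvPolynomial.mkDerivation K ![X 1, X 2, 0]

/-- The canonical map `K[x,y,z] → K[x,y,z][z⁻¹]`. -/
noncomputable def locMap (K : Type*) [Field K] :
    MvPolynomial (Fin 3) K →+* Localization.Away (X 2 : MvPolynomial (Fin 3) K) :=
  algebraMap _ _

namespace ParabAux
set_option linter.unusedSectionVars false

section Implicit
variable {K : Type*} [Field K] [CharZero K]

/-- substitution `x ↦ y² - 2xz, y ↦ y, z ↦ z`. -/
noncomputable def phi : MvPolynomial (Fin 3) K →ₐ[K] MvPolynomial (Fin 3) K :=
  aeval ![(X 1)^2 - 2 * X 0 * X 2, X 1, X 2]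


lemma pd_X0 : parabolicDerivation K (X 0) = X 1 := by simp [parabolicDerivation, mkDerivation_X]
lemma pd_X1 : parabolicDerivation K (X 1) = X 2 := by simp [parabolicDerivation, mkDerivation_X]
lemma pd_X2 : parabolicDerivation K (X 2) = 0 := by simp [parabolicDerivation, mkDerivation_X]
lemma pd_two : parabolicDerivation K (2 : MvPolynomial (Fin 3) K) = 0 := by
  have h : ((2:ℕ) : MvPolynomial (Fin 3) K) = 2 := by norm_num
  rw [← h]; exact Derivation.map_natCast _ 2
lemma pd_w : parabolicDerivation K ((X 1)^2 - 2 * X 0 * X 2) = 0 := by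
  simp [Derivation.leibniz, pow_two, pd_X0, pd_X1, pd_X2, pd_two, smul_eq_mul]
  ring

lemma phi_X0 : phi (X 0 : MvPolynomial (Fin 3) K) = (X 1)^2 - 2 * X 0 * X 2 := by
  simp [phi]
lemma phi_X1 : phi (X 1 : MvPolynomial (Fin 3) K) = X 1 := by simp [phi]
lemma phi_X2 : phi (X 2 : MvPolynomial (Fin 3) K) = X 2 := by simp [phi]

lemma pd_phi_X (i : Fin 3) :
    parabolicDerivation K (phi (X i)) = phi (pderiv 1 (X i)) * X 2 := by
  fin_cases i
  · show parabolicDerivation K (phi (X 0)) = phi (pderiv 1 (X 0)) * X 2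
    rw [phi_X0, pd_w, pderiv_X_of_ne (show (0:Fin 3) ≠ 1 by decide)]
    simp
  · show parabolicDerivation K (phi (X 1)) = phi (pderiv 1 (X 1)) * X 2
    rw [phi_X1, pd_X1, pderiv_X_self]
    simp
  · show parabolicDerivation K (phi (X 2)) = phi (pderiv 1 (X 2)) * X 2
    rw [phi_X2, pd_X2, pderiv_X_of_ne (show (2:Fin 3) ≠ 1 by decide)]
    simp

/-- chain rule -/
lemma pd_phi (f : MvPolynomial (Fin 3) K) :
    parabolicDerivation K (phi f) = phi (pderiv 1 f) * X 2 := by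
  induction f using MvPolynomial.induction_on with
  | C a => simp [phi]
  | add p q hp hq => simp [map_add, hp, hq]; ring
  | mul_X p i hp =>
      rw [map_mul, Derivation.leibniz, hp, pderiv_mul, map_add, map_mul, map_mul, pd_phi_X]
      simp only [smul_eq_mul]
      ring

lemma coeff_pderiv {σ : Type*} [DecidableEq σ] (i : σ) (f : MvPolynomial σ K) (m : σ →₀ ℕ) :
    coeff m (pderiv i f) = coeff (m + Finsupp.single i 1) f * ((m i : K) + 1) := by
  induction f using MvPolynomial.induction_on' with
  | monomial s a =>
      rw [pderiv_monomial, coeff_monomial, coeff_monomial]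
      by_cases h : s = m + Finsupp.single i 1
      · subst h
        have h1 : m + Finsupp.single i 1 - Finsupp.single i 1 = m := by
          ext j
          simp only [Finsupp.tsub_apply, Finsupp.add_apply, Finsupp.single_apply]
          split <;> omega
        rw [if_pos h1]
        have h2 : (m + Finsupp.single i 1 : σ →₀ ℕ) i = m i + 1 := by
          rw [Finsupp.add_apply, Finsupp.single_eq_same]
        rw [h2, if_pos rfl]
        push_cast
        ring
      · rw [if_neg h]
        by_cases h2 : s - Finsupp.single i 1 = m
        · have hsi : s i = 0 := by
            by_contra hne
            apply h
            ext j
            have h2j : (s - Finsupp.single i 1 : σ →₀ ℕ) j = m j := by rw [h2]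
            rw [Finsupp.tsub_apply, Finsupp.single_apply] at h2j
            rw [Finsupp.add_apply, Finsupp.single_apply]
            by_cases hji : i = j
            · rw [if_pos hji] at h2j ⊢; subst hji; omega
            · rw [if_neg hji] at h2j ⊢; omega
          rw [if_pos h2, hsi]
          simp
        · rw [if_neg h2, zero_mul]
  | add p q hp hq => simp [hp, hq]; ring

lemma no_var_one {f : MvPolynomial (Fin 3) K} (h : pderiv 1 f = 0) :
    f ∈ supported K ({0, 2} : Set (Fin 3)) := by
  rw [mem_supported]
  intro i hi
  fin_cases i
  · simp
  · exfalso
    rcases (mem_vars (1 : Fin 3)).1 (by simpa using hi) with ⟨m, hm, him⟩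
    have hm1 : m 1 ≠ 0 := Finsupp.mem_support_iff.1 him
    have key := coeff_pderiv (1 : Fin 3) f (m - Finsupp.single 1 1)
    rw [h] at key
    have hms : m - Finsupp.single 1 1 + Finsupp.single 1 1 = m := by
      ext j
      simp only [Finsupp.add_apply, Finsupp.tsub_apply, Finsupp.single_apply]
      split <;> rename_i hj
      · subst hj; omega
      · omega
    rw [hms] at key
    rcases mul_eq_zero.1 key.symm with hc | hc
    · exact Finsupp.mem_support_iff.1 hm hc
    · have : (((m - Finsupp.single 1 1 : Fin 3 →₀ ℕ) 1 : ℕ) : K) + 1 ≠ 0 := by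
        have := Nat.cast_add_one_ne_zero (R := K) ((m - Finsupp.single 1 1 : Fin 3 →₀ ℕ) 1)
        push_cast at this ⊢
        exact this
      exact this hc
  · simp

end Implicit

section Explicit
variable (K : Type*) [Field K] [CharZero K]

local notation "R3" => MvPolynomial (Fin 3) K
local notation "B" => Localization.Away (X 2 : MvPolynomial (Fin 3) K)
local notation "iv" => (Localization.Away.invSelf (X 2) : Localization.Away (X 2 : MvPolynomial (Fin 3) K))

lemma mul_iv : locMap K (X 2) * iv = 1 := by
  rw [locMap, Localization.Away.invSelf, ← Localization.mk_one_eq_algebraMap,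
    Localization.mk_mul, mul_one, one_mul]
  exact Localization.mk_self ⟨X 2, Submonoid.mem_powers _⟩

lemma loc_injective : Function.Injective (locMap K) := by
  apply IsLocalization.injective B (M := Submonoid.powers (X 2 : R3))
  exact powers_le_nonZeroDivisors_of_noZeroDivisors (MvPolynomial.X_ne_zero 2)

lemma unit_z : IsUnit (locMap K (X 2)) := IsUnit.of_mul_eq_one _ (mul_iv K)
lemma unit_iv : IsUnit iv := IsUnit.of_mul_eq_one _ (by rw [mul_comm]; exact mul_iv K)

lemma iv_unique (t : B) (h : locMap K (X 2) * t = 1) : t = iv := by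
  have := mul_iv K
  calc t = (locMap K (X 2) * iv) * t := by rw [mul_iv K, one_mul]
  _ = (locMap K (X 2) * t) * iv := by ring
  _ = iv := by rw [h, one_mul]

/-- `F1 : B → B`, `x ↦ y² - 2xz, y ↦ y, z ↦ z` extended to the localization. -/
noncomputable def F1 : B →+* B :=
  IsLocalization.Away.lift (g := (locMap K).comp (phi (K := K)).toRingHom) (X 2)
    (by show IsUnit (locMap K (phi (K := K) (X 2))); simp [phi]; exact unit_z K)

lemma F1_loc (p : R3) : F1 K (locMap K p) = locMap K (phi (K := K) p) :=
  IsLocalization.Away.lift_eq _ _ p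

/-- `F2 : B → B`, inverse substitution `x ↦ (y² - x)/(2z), y ↦ y, z ↦ z`. -/
noncomputable def g2 : MvPolynomial (Fin 3) K →ₐ[K] B :=
  aeval ![(algebraMap K B (2⁻¹ : K)) * ((locMap K (X 1))^2 - locMap K (X 0)) * iv,
          locMap K (X 1), locMap K (X 2)]

noncomputable def F2 : B →+* B :=
  IsLocalization.Away.lift (g := (g2 K).toRingHom) (X 2)
    (by show IsUnit (g2 K (X 2)); simp [g2]; exact unit_z K)

lemma F2_loc (p : R3) : F2 K (locMap K p) = g2 K p :=
  IsLocalization.Away.lift_eq _ _ p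

lemma F1_iv : F1 K iv = iv := by
  apply iv_unique
  have : locMap K (X 2) = F1 K (locMap K (X 2)) := by rw [F1_loc]; simp [phi]
  rw [this, ← map_mul, mul_iv, map_one]

lemma F2_iv : F2 K iv = iv := by
  apply iv_unique
  have : locMap K (X 2) = F2 K (locMap K (X 2)) := by rw [F2_loc]; simp [g2]
  rw [this, ← map_mul, mul_iv, map_one]

lemma alg_eq (c : K) : algebraMap K B c = locMap K (C c) := by
  rw [IsScalarTower.algebraMap_apply K R3 B]
  rfl

lemma F1_alg (c : K) : F1 K (algebraMap K B c) = algebraMap K B c := by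
  rw [alg_eq, F1_loc]
  congr 1
  simp [phi]

lemma F2_alg (c : K) : F2 K (algebraMap K B c) = algebraMap K B c := by
  rw [alg_eq, F2_loc]
  simp [g2, alg_eq]

lemma two_inv : (2 : B) * algebraMap K B (2⁻¹ : K) = 1 := by
  have : (2 : B) = algebraMap K B (2 : K) := by
    rw [map_ofNat]
  rw [this, ← map_mul]
  norm_num

lemma F1_g2 : (F1 K).comp (g2 K).toRingHom = locMap K := by
  apply MvPolynomial.ringHom_ext
  · intro c
    show F1 K (g2 K (C c)) = locMap K (C c)
    rw [show g2 K (C c) = algebraMap K B c by simp [g2], F1_alg, alg_eq]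
  · intro i
    show F1 K (g2 K (X i)) = locMap K (X i)
    fin_cases i
    · show F1 K (g2 K (X 0)) = locMap K (X 0)
      have e : g2 K (X 0)
          = algebraMap K B (2⁻¹ : K) * ((locMap K (X 1))^2 - locMap K (X 0)) * iv := by
        simp [g2]
      rw [e]
      rw [map_mul, map_mul, map_sub, map_pow, F1_iv, F1_alg, F1_loc, F1_loc]
      have e1 : phi (K := K) (X 1) = X 1 := by simp [phi]
      have e2 : phi (K := K) (X 0) = (X 1)^2 - 2 * X 0 * X 2 := by simp [phi]
      rw [e1, e2, map_sub, map_pow, map_mul, map_mul]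
      have hzi := mul_iv K
      have h2 := two_inv K
      have hC2 : locMap K (2 : R3) = (2 : B) := by rw [map_ofNat]
      rw [hC2]
      linear_combination (algebraMap K B (2⁻¹:K) * 2 * locMap K (X 0)) * hzi +
        (locMap K (X 0)) * h2
    · show F1 K (g2 K (X 1)) = locMap K (X 1)
      have e : g2 K (X 1) = locMap K (X 1) := by simp [g2]
      rw [e, F1_loc]
      congr 1
      simp [phi]
    · show F1 K (g2 K (X 2)) = locMap K (X 2)
      have e : g2 K (X 2) = locMap K (X 2) := by simp [g2]
      rw [e, F1_loc]
      congr 1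
      simp [phi]

lemma F2_phi : (F2 K).comp ((locMap K).comp (phi (K := K)).toRingHom) = locMap K := by
  apply MvPolynomial.ringHom_ext
  · intro c
    show F2 K (locMap K (phi (K := K) (C c))) = locMap K (C c)
    rw [show phi (K := K) (C c) = C c by simp [phi], F2_loc]
    simp [g2, alg_eq]
  · intro i
    show F2 K (locMap K (phi (K := K) (X i))) = locMap K (X i)
    fin_cases i
    · show F2 K (locMap K (phi (K := K) (X 0))) = locMap K (X 0)
      have e2 : phi (K := K) (X 0) = (X 1)^2 - 2 * X 0 * X 2 := by simp [phi]
      rw [e2, F2_loc]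
      have e : g2 K ((X 1)^2 - 2 * X 0 * X 2 : R3)
          = (locMap K (X 1))^2 - 2 * (algebraMap K B (2⁻¹ : K)
            * ((locMap K (X 1))^2 - locMap K (X 0)) * iv) * locMap K (X 2) := by
        simp [g2]
      rw [e]
      have hzi := mul_iv K
      have h2 := two_inv K
      linear_combination (-((locMap K (X 1))^2 - locMap K (X 0)) * iv * locMap K (X 2)) * h2 +
        (-((locMap K (X 1))^2 - locMap K (X 0))) * hzi
    · show F2 K (locMap K (phi (K := K) (X 1))) = locMap K (X 1)
      rw [show phi (K := K) (X 1) = X 1 by simp [phi], F2_loc]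
      simp [g2]
    · show F2 K (locMap K (phi (K := K) (X 2))) = locMap K (X 2)
      rw [show phi (K := K) (X 2) = X 2 by simp [phi], F2_loc]
      simp [g2]

lemma decompose (q : B) : ∃ (n : ℕ) (f : R3), q = locMap K f * iv^n := by
  obtain ⟨n, f, h⟩ := IsLocalization.Away.surj (S := B) (X 2 : R3) q
  refine ⟨n, f, ?_⟩
  have h1 : q * ((locMap K (X 2) * iv)^n) = locMap K f * iv^n := by
    rw [mul_pow, ← mul_assoc]
    rw [show q * locMap K (X 2)^n = locMap K f from h]
  rwa [mul_iv, one_pow, mul_one] at h1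

lemma F1_F2 (q : B) : F1 K (F2 K q) = q := by
  obtain ⟨n, f, rfl⟩ := decompose K q
  rw [map_mul, map_mul, map_pow, map_pow, F2_iv, F1_iv, F2_loc]
  have : F1 K (g2 K f) = locMap K f := congrFun (congrArg (fun h => h.toFun) (F1_g2 K)) f
  rw [this]

lemma phi_injective : Function.Injective (phi (K := K)) := by
  intro p q h
  apply loc_injective K
  have h1 := congrFun (congrArg (fun h => h.toFun) (F2_phi (K := K))) p
  have h2 := congrFun (congrArg (fun h => h.toFun) (F2_phi (K := K))) q
  simp only [RingHom.toFun_eq_coe, RingHom.coe_comp, Function.comp_apply] at h1 h2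
  rw [← h1, ← h2]
  show F2 K (locMap K (phi (K := K) p)) = F2 K (locMap K (phi (K := K) q))
  rw [h]

end Explicit
end ParabAux

open ParabAux

theorem parabolicDerivation_localized_slices (K : Type*) [Field K] [CharZero K]
    (D : Derivation K (Localization.Away (X 2 : MvPolynomial (Fin 3) K))
          (Localization.Away (X 2 : MvPolynomial (Fin 3) K)))
    (hext : ∀ p : MvPolynomial (Fin 3) K,
      D (locMap K p) = locMap K (parabolicDerivation K p)) :
    (∀ s : Localization.Away (X 2 : MvPolynomial (Fin 3) K), D s = 1 →
      D (s - locMap K (X 1) * Localization.Away.invSelf (X 2)) = 0) ∧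
    (∀ q : Localization.Away (X 2 : MvPolynomial (Fin 3) K), D q = 0 ↔
      q ∈ Algebra.adjoin K ({locMap K (X 2), Localization.Away.invSelf (X 2),
        locMap K ((X 1) ^ 2 - 2 * X 0 * X 2)} :
        Set (Localization.Away (X 2 : MvPolynomial (Fin 3) K)))) := by
  have hz : D (locMap K (X 2)) = 0 := by rw [hext, pd_X2, map_zero]
  have hy : D (locMap K (X 1)) = locMap K (X 2) := by rw [hext, pd_X1]
  have hw : D (locMap K ((X 1) ^ 2 - 2 * X 0 * X 2)) = 0 := by rw [hext, pd_w, map_zero]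
  have hiv : D (Localization.Away.invSelf (X 2)
      : Localization.Away (X 2 : MvPolynomial (Fin 3) K)) = 0 := by
    have h1 := congrArg D (mul_iv K)
    rw [Derivation.leibniz, Derivation.map_one_eq_zero, hz, smul_zero, add_zero, smul_eq_mul] at h1
    calc D (Localization.Away.invSelf (X 2))
        = Localization.Away.invSelf (X 2) *
          (locMap K (X 2) * D (Localization.Away.invSelf (X 2))) := by
          rw [← mul_assoc, mul_comm (Localization.Away.invSelf (X 2)), mul_iv, one_mul]
      _ = 0 := by rw [h1, mul_zero]
  have hyi : D (locMap K (X 1) * Localization.Away.invSelf (X 2)) = 1 := by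
    rw [Derivation.leibniz, hiv, smul_zero, zero_add, smul_eq_mul, hy, mul_comm, mul_iv]
  constructor
  · intro s hs
    rw [map_sub, hs, hyi, sub_self]
  · intro q
    constructor
    · intro hq
      obtain ⟨n, f, hq'⟩ := decompose K (F2 K q)
      have hqe : q = locMap K (phi (K := K) f) * (Localization.Away.invSelf (X 2))^n := by
        conv_lhs => rw [← F1_F2 K q]
        rw [hq', map_mul, map_pow, F1_iv, F1_loc]
      have hDivn : D ((Localization.Away.invSelf (X 2)
          : Localization.Away (X 2 : MvPolynomial (Fin 3) K))^n) = 0 := by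
        simp [Derivation.leibniz_pow, hiv]
      have h0 : locMap K (phi (K := K) (pderiv 1 f)) * locMap K (X 2) *
          (Localization.Away.invSelf (X 2))^n = 0 := by
        have : D q = locMap K (phi (K := K) (pderiv 1 f)) * locMap K (X 2) *
            (Localization.Away.invSelf (X 2))^n := by
          rw [hqe, Derivation.leibniz, hDivn, smul_zero, zero_add, smul_eq_mul,
            hext, pd_phi, map_mul]
          ring
        rw [← this, hq]
      have hu : IsUnit (locMap K (X 2) * (Localization.Away.invSelf (X 2)
          : Localization.Away (X 2 : MvPolynomial (Fin 3) K))^n) :=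
        (unit_z K).mul ((unit_iv K).pow n)
      have hloc0 : locMap K (phi (K := K) (pderiv 1 f)) = 0 :=
        hu.mul_right_eq_zero.mp (by linear_combination h0)
      have hphi0 : phi (K := K) (pderiv 1 f) = 0 := by
        apply loc_injective K
        rw [hloc0, map_zero]
      have hg0 : pderiv 1 f = 0 := by
        apply phi_injective (K := K)
        rw [map_zero]
        exact hphi0
      have hfs : f ∈ Algebra.adjoin K (X '' ({0, 2} : Set (Fin 3))) := no_var_one hg0
      set ψ : MvPolynomial (Fin 3) K →ₐ[K]
          Localization.Away (X 2 : MvPolynomial (Fin 3) K) :=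
        (IsScalarTower.toAlgHom K (MvPolynomial (Fin 3) K)
          (Localization.Away (X 2 : MvPolynomial (Fin 3) K))).comp (phi (K := K)) with hψ
      have himg : ψ f ∈ Algebra.adjoin K (ψ '' (X '' ({0, 2} : Set (Fin 3)))) := by
        rw [← AlgHom.map_adjoin]
        exact ⟨f, hfs, rfl⟩
      have hsub : ψ '' (X '' ({0, 2} : Set (Fin 3))) ⊆
          ({locMap K (X 2), Localization.Away.invSelf (X 2),
            locMap K ((X 1) ^ 2 - 2 * X 0 * X 2)} :
            Set (Localization.Away (X 2 : MvPolynomial (Fin 3) K))) := by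
        rw [Set.image_insert_eq, Set.image_singleton, Set.image_insert_eq,
          Set.image_singleton]
        intro t ht
        rcases ht with rfl | rfl
        · right; right
          show locMap K (phi (K := K) (X 0)) ∈ _
          rw [show phi (K := K) (X 0) = (X 1)^2 - 2 * X 0 * X 2 by simp [phi]]
          rfl
        · left
          show locMap K (phi (K := K) (X 2)) = locMap K (X 2)
          rw [show phi (K := K) (X 2) = X 2 by simp [phi]]
      have hmem : ψ f ∈ Algebra.adjoin K ({locMap K (X 2), Localization.Away.invSelf (X 2),
          locMap K ((X 1) ^ 2 - 2 * X 0 * X 2)} :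
          Set (Localization.Away (X 2 : MvPolynomial (Fin 3) K))) :=
        Algebra.adjoin_mono hsub himg
      rw [hqe]
      exact mul_mem hmem (pow_mem (Algebra.subset_adjoin (by simp)) n)
    · intro hq
      induction hq using Algebra.adjoin_induction with
      | mem t ht =>
          rcases ht with rfl | rfl | rfl
          · exact hz
          · exact hiv
          · exact hw
      | algebraMap r => exact Derivation.map_algebraMap D r
      | add a b ha hb hda hdb => rw [map_add, hda, hdb, add_zero]
      | mul a b ha hb hda hdb => rw [Derivation.leibniz, hda, hdb, smul_zero, smul_zero, add_zero]
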